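/- Let g be an invertible linear endomorphism of a d-dimensional real vector space with eigenvalues λ₁,…,λ_d (with multiplicity, over ℂ) ordered by nondecreasing modulus, and let p + q = d with 1 ≤ p ≤ d. Then the p-th exterior power Λ^p g has a unique eigenvalue of maximal modulus, and this eigenvalue is simple, if and only if |λ_q| < |λ_{q+1}|. -/

import Mathlib

open Finset

private lemma topset_card (d q : ℕ) (h : q ≤ d) :
    (Finset.univ.filter fun i : Fin d => q ≤ i.val).card = d - q := by
  have : (Finset.univ.filter fun i : Fin d => q ≤ i.val) =
      (Finset.Ico q d).attachFin (fun m hm => (Finset.mem_Ico.mp hm).2) := by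
    ext i
    simp [Finset.mem_attachFin, Finset.mem_Ico, i.isLt]
  rw [this, Finset.card_attachFin, Nat.card_Ico]

private lemma prod_le_top {d p q : ℕ} (hpq : p + q = d) (a : Fin d → ℝ)
    (hpos : ∀ i, 0 < a i) (hmono : Monotone a) :
    ∀ n (s : Finset (Fin d)),
      (s \ (Finset.univ.filter fun i : Fin d => q ≤ i.val)).card = n → s.card = p →
      ∏ i ∈ s, a i ≤ ∏ i ∈ Finset.univ.filter (fun i : Fin d => q ≤ i.val), a i := by
  set T := Finset.univ.filter fun i : Fin d => q ≤ i.val with hT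
  have hTc : T.card = p := by rw [hT, topset_card d q (by omega)]; omega
  intro n
  induction n with
  | zero =>
    intro s h0 hc
    have hsub : s ⊆ T := by
      rw [← sdiff_eq_empty_iff_subset]; exact card_eq_zero.mp h0
    have : s = T := eq_of_subset_of_card_le hsub (by rw [hTc, hc])
    rw [this]
  | succ n ih =>
    intro s hn hc
    have hne : (s \ T).Nonempty := by rw [← card_pos, hn]; omega
    obtain ⟨i, hi⟩ := hne
    have e1 : (T \ s).card + (T ∩ s).card = T.card := card_sdiff_add_card_inter T s
    have e2 : (s \ T).card + (s ∩ T).card = s.card := card_sdiff_add_card_inter s T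
    have einter : (T ∩ s).card = (s ∩ T).card := by rw [inter_comm]
    have hTsne : (T \ s).Nonempty := by rw [← card_pos]; omega
    obtain ⟨j, hj⟩ := hTsne
    rw [mem_sdiff] at hi hj
    have hjq : q ≤ j.val := by have := hj.1; rw [hT, mem_filter] at this; exact this.2
    have hiq : i.val < q := by
      have := hi.2; by_contra hcon
      exact this (by rw [hT, mem_filter]; exact ⟨mem_univ i, by omega⟩)
    have hij : a i ≤ a j := hmono (by rw [Fin.le_def]; omega)
    have hjni : j ∉ s.erase i := fun h => hj.2 (mem_of_mem_erase h)
    have hcard' : (insert j (s.erase i)).card = p := by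
      rw [card_insert_of_notMem hjni, card_erase_of_mem hi.1, hc]
      have : 1 ≤ p := by
        rw [← hc]; exact card_pos.mpr ⟨i, hi.1⟩
      omega
    have hsd : ((insert j (s.erase i)) \ T).card = n := by
      have hsd0 : s.erase i \ T = (s \ T).erase i := by
        ext x; simp only [mem_erase, mem_sdiff]; tauto
      rw [insert_sdiff_of_mem _ hj.1, hsd0,
        card_erase_of_mem (mem_sdiff.mpr hi), hn]
      omega
    have hP : (0:ℝ) ≤ ∏ k ∈ s.erase i, a k := le_of_lt (prod_pos fun k _ => hpos k)
    calc ∏ k ∈ s, a k = a i * ∏ k ∈ s.erase i, a k := (mul_prod_erase s a hi.1).symm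
      _ ≤ a j * ∏ k ∈ s.erase i, a k := mul_le_mul_of_nonneg_right hij hP
      _ = ∏ k ∈ insert j (s.erase i), a k := (prod_insert hjni).symm
      _ ≤ ∏ i ∈ T, a i := ih _ hsd hcard'

private lemma prod_lt_top {d p q : ℕ} (hp : 1 ≤ p) (hq : 1 ≤ q) (hpq : p + q = d) (a : Fin d → ℝ)
    (hpos : ∀ i, 0 < a i) (hmono : Monotone a)
    (hlt : a ⟨q - 1, by rw [← hpq]; omega⟩ < a ⟨q, by rw [← hpq]; omega⟩)
    (s : Finset (Fin d)) (hc : s.card = p)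
    (hne : s ≠ Finset.univ.filter fun i : Fin d => q ≤ i.val) :
    ∏ i ∈ s, a i < ∏ i ∈ Finset.univ.filter (fun i : Fin d => q ≤ i.val), a i := by
  set T := Finset.univ.filter fun i : Fin d => q ≤ i.val with hT
  have hTc : T.card = p := by rw [hT, topset_card d q (by omega)]; omega
  have hsdne : (s \ T).Nonempty := by
    rw [← card_pos]
    by_contra h
    push_neg at h
    have h0 : (s \ T).card = 0 := by omega
    have hsub : s ⊆ T := by rw [← sdiff_eq_empty_iff_subset]; exact card_eq_zero.mp h0
    exact hne (eq_of_subset_of_card_le hsub (by rw [hTc, hc]))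
  obtain ⟨i, hi⟩ := hsdne
  have e1 : (T \ s).card + (T ∩ s).card = T.card := card_sdiff_add_card_inter T s
  have e2 : (s \ T).card + (s ∩ T).card = s.card := card_sdiff_add_card_inter s T
  have einter : (T ∩ s).card = (s ∩ T).card := by rw [inter_comm]
  have hTsne : (T \ s).Nonempty := by
    rw [← card_pos]
    have : 0 < (s \ T).card := card_pos.mpr ⟨i, hi⟩
    omega
  obtain ⟨j, hj⟩ := hTsne
  rw [mem_sdiff] at hi hj
  have hjq : q ≤ j.val := by have := hj.1; rw [hT, mem_filter] at this; exact this.2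
  have hiq : i.val < q := by
    have := hi.2; by_contra hcon
    exact this (by rw [hT, mem_filter]; exact ⟨mem_univ i, by omega⟩)
  have hij : a i < a j :=
    lt_of_le_of_lt (hmono (show i ≤ ⟨q - 1, by omega⟩ from Fin.le_def.mpr (by simpa using by omega)))
      (lt_of_lt_of_le hlt (hmono (Fin.mk_le_mk.mpr (by omega))))
  have hjni : j ∉ s.erase i := fun h => hj.2 (mem_of_mem_erase h)
  have hcard' : (insert j (s.erase i)).card = p := by
    rw [card_insert_of_notMem hjni, card_erase_of_mem hi.1, hc]
    have : 1 ≤ p := by rw [← hc]; exact card_pos.mpr ⟨i, hi.1⟩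
    omega
  have hP : (0:ℝ) < ∏ k ∈ s.erase i, a k := prod_pos fun k _ => hpos k
  calc ∏ k ∈ s, a k = a i * ∏ k ∈ s.erase i, a k := (mul_prod_erase s a hi.1).symm
    _ < a j * ∏ k ∈ s.erase i, a k := mul_lt_mul_of_pos_right hij hP
    _ = ∏ k ∈ insert j (s.erase i), a k := (prod_insert hjni).symm
    _ ≤ ∏ i ∈ T, a i := prod_le_top hpq a hpos hmono _ _ rfl hcard'

theorem exteriorPower_proximal_iff (d p q : ℕ) (hp : 1 ≤ p) (hq : 1 ≤ q)
    (hpq : p + q = d) (lam : Fin d → ℂ) (hne : ∀ i, lam i ≠ 0)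
    (hmono : Monotone fun i => ‖lam i‖) :
    (∃ s₀ : Finset (Fin d), s₀.card = p ∧
        ∀ s : Finset (Fin d), s.card = p → s ≠ s₀ →
          ‖∏ i ∈ s, lam i‖ < ‖∏ i ∈ s₀, lam i‖) ↔
      ‖lam ⟨q - 1, by omega⟩‖ < ‖lam ⟨q, by omega⟩‖ := by
  set a : Fin d → ℝ := fun i => ‖lam i‖ with ha
  have hpos : ∀ i, 0 < a i := fun i => by
    simp only [ha]; exact norm_pos_iff.mpr (hne i)
  have habs : ∀ s : Finset (Fin d), ‖∏ i ∈ s, lam i‖ = ∏ i ∈ s, a i :=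
    fun s => norm_prod s lam
  set T := Finset.univ.filter fun i : Fin d => q ≤ i.val with hT
  clear_value T
  have hTc : T.card = p := by rw [hT, topset_card d q (by omega)]; omega
  constructor
  · rintro ⟨s₀, hs₀c, hmax⟩
    by_contra hcon
    push_neg at hcon
    have heq : a ⟨q - 1, by omega⟩ = a ⟨q, by omega⟩ :=
      le_antisymm (hmono (Fin.mk_le_mk.mpr (by omega))) hcon
    -- s₀ must equal T
    have hs₀T : s₀ = T := by
      by_contra hns
      have h1 : ‖∏ i ∈ T, lam i‖ < ‖∏ i ∈ s₀, lam i‖ :=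
        hmax T hTc (fun h => hns h.symm)
      have h2 : ∏ i ∈ s₀, a i ≤ ∏ i ∈ T, a i := by
        rw [hT]; exact prod_le_top hpq a hpos hmono _ _ rfl hs₀c
      rw [habs, habs] at h1
      linarith
    -- swap q-1 for q in T gives same product
    have hqT : (⟨q, by omega⟩ : Fin d) ∈ T := by simp [hT]
    have hq1T : (⟨q - 1, by omega⟩ : Fin d) ∉ T := by simp [hT]; omega
    set T' := insert (⟨q - 1, by omega⟩ : Fin d) (T.erase ⟨q, by omega⟩) with hT'
    clear_value T'
    have hq1ne : (⟨q - 1, by omega⟩ : Fin d) ∉ T.erase ⟨q, by omega⟩ :=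
      fun h => hq1T (mem_of_mem_erase h)
    have hT'c : T'.card = p := by
      rw [hT', card_insert_of_notMem hq1ne, card_erase_of_mem hqT, hTc]; omega
    have hT'ne : T' ≠ s₀ := by
      rw [hs₀T]
      intro h
      apply hq1T
      have hmem : (⟨q - 1, by omega⟩ : Fin d) ∈ T' := hT' ▸ mem_insert_self _ _
      exact h ▸ hmem
    have hprodeq : ∏ i ∈ T', a i = ∏ i ∈ T, a i := by
      rw [hT', prod_insert hq1ne, heq, mul_prod_erase T a hqT]
    have := hmax T' hT'c hT'ne
    rw [habs, habs, hs₀T, hprodeq] at this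
    exact lt_irrefl _ this
  · intro hlt
    refine ⟨T, hTc, fun s hsc hsne => ?_⟩
    rw [habs, habs]
    rw [hT]
    rw [hT] at hsne
    exact prod_lt_top hp hq hpq a hpos hmono hlt s hsc hsne
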